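/- Let m be a natural number, let F : (ℝ^m) × ℝ → ℝ be continuously differentiable, and let t₀ > 0. Let a, b : [0, t₀) → ℝ^m be two paths such that for every t ∈ [0, t₀): the derivative of x ↦ F(x, t) at a(t) is zero and the derivative of x ↦ F(x, t) at b(t) is zero; moreover ∂_t F(a(t), t) > 0 and ∂_t F(b(t), t) < 0, where ∂_t F(x, t) denotes the derivative of s ↦ F(x, s) at s = t. Suppose there is a point c ∈ ℝ^m such that a(t) → c and b(t) → c as t → t₀ from below. Then the total derivative of F at (c, t₀) is zero, i.e. (c, t₀) is a critical point of F. -/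

import Mathlib

open Set Filter

/-- Lemma `noncrit` (Section 2): if two paths of critical points of the slices
`x ↦ F (x, t)`, one with positive and one with negative time derivative of `F`, merge
at a common limit point `c` as `t → t₀⁻`, then `(c, t₀)` is a critical point of `F`. -/
theorem lemma_noncrit (m : ℕ) (F : (Fin m → ℝ) × ℝ → ℝ) (hF : ContDiff ℝ 1 F)
    (t₀ : ℝ) (ht₀ : 0 < t₀) (a b : ℝ → (Fin m → ℝ))
    (hacrit : ∀ t, 0 ≤ t → t < t₀ → fderiv ℝ (fun x => F (x, t)) (a t) = 0)
    (hbcrit : ∀ t, 0 ≤ t → t < t₀ → fderiv ℝ (fun x => F (x, t)) (b t) = 0)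
    (hapos : ∀ t, 0 ≤ t → t < t₀ → 0 < deriv (fun s => F (a t, s)) t)
    (hbneg : ∀ t, 0 ≤ t → t < t₀ → deriv (fun s => F (b t, s)) t < 0)
    (c : Fin m → ℝ)
    (hac : Tendsto a (nhdsWithin t₀ (Iio t₀)) (nhds c))
    (hbc : Tendsto b (nhdsWithin t₀ (Iio t₀)) (nhds c)) :
    fderiv ℝ F (c, t₀) = 0 := by
  have hdiff : Differentiable ℝ F := hF.differentiable one_ne_zero
  set D := fderiv ℝ F with hD
  have hDcont : Continuous D := hF.continuous_fderiv one_ne_zero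
  -- eventually t ∈ Ioo 0 t₀
  have hev : ∀ᶠ t in nhdsWithin t₀ (Iio t₀), t ∈ Ioo 0 t₀ :=
    Ioo_mem_nhdsLT_of_mem ⟨ht₀, le_rfl⟩
  have hta : Tendsto (fun t => (a t, t)) (nhdsWithin t₀ (Iio t₀)) (nhds (c, t₀)) :=
    hac.prodMk_nhds (tendsto_id.mono_left nhdsWithin_le_nhds)
  have htb : Tendsto (fun t => (b t, t)) (nhdsWithin t₀ (Iio t₀)) (nhds (c, t₀)) :=
    hbc.prodMk_nhds (tendsto_id.mono_left nhdsWithin_le_nhds)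
  -- evaluation tendsto
  have heval : ∀ (v : (Fin m → ℝ) × ℝ),
      Tendsto (fun t => D (a t, t) v) (nhdsWithin t₀ (Iio t₀)) (nhds (D (c, t₀) v)) := by
    intro v
    exact (((ContinuousLinearMap.apply ℝ ℝ v).continuous.comp hDcont).tendsto (c, t₀)).comp hta
  have hevalb : ∀ (v : (Fin m → ℝ) × ℝ),
      Tendsto (fun t => D (b t, t) v) (nhdsWithin t₀ (Iio t₀)) (nhds (D (c, t₀) v)) := by
    intro v
    exact (((ContinuousLinearMap.apply ℝ ℝ v).continuous.comp hDcont).tendsto (c, t₀)).comp htb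
  -- slice derivatives
  have hslice : ∀ (x : Fin m → ℝ) (t : ℝ),
      fderiv ℝ (fun y => F (y, t)) x =
        (D (x, t)).comp (ContinuousLinearMap.inl ℝ (Fin m → ℝ) ℝ) := by
    intro x t
    exact (((hdiff (x, t)).hasFDerivAt).comp x (hasFDerivAt_prodMk_left x t)).fderiv
  have htime : ∀ (x : Fin m → ℝ) (t : ℝ),
      deriv (fun s => F (x, s)) t = D (x, t) (0, 1) := by
    intro x t
    have hd : HasDerivAt (fun s : ℝ => ((x : Fin m → ℝ), s)) ((0 : Fin m → ℝ), (1 : ℝ)) t :=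
      (hasDerivAt_const t x).prodMk (hasDerivAt_id t)
    exact (((hdiff (x, t)).hasFDerivAt).comp_hasDerivAt t hd).deriv
  -- spatial part vanishes
  have hsp : ∀ x : Fin m → ℝ, D (c, t₀) (x, 0) = 0 := by
    intro x
    have hev0 : ∀ᶠ t in nhdsWithin t₀ (Iio t₀), D (a t, t) (x, 0) = 0 := by
      filter_upwards [hev] with t ht
      have h1 := hacrit t ht.1.le ht.2
      have h2 := hslice (a t) t
      have : (D (a t, t)).comp (ContinuousLinearMap.inl ℝ (Fin m → ℝ) ℝ) = 0 := by
        rw [← h2, h1]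
      calc D (a t, t) (x, 0)
          = ((D (a t, t)).comp (ContinuousLinearMap.inl ℝ (Fin m → ℝ) ℝ)) x := rfl
        _ = 0 := by rw [this]; rfl
    exact tendsto_nhds_unique (heval (x, 0))
      (tendsto_const_nhds.congr' (hev0.mono fun t ht => ht.symm))
  -- time part vanishes
  have htpos : 0 ≤ D (c, t₀) (0, 1) := by
    have hpos : ∀ᶠ t in nhdsWithin t₀ (Iio t₀), 0 ≤ D (a t, t) (0, 1) := by
      filter_upwards [hev] with t ht
      have := hapos t ht.1.le ht.2
      rw [htime (a t) t] at this
      exact this.le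
    exact ge_of_tendsto (heval (0, 1)) hpos
  have htneg : D (c, t₀) (0, 1) ≤ 0 := by
    have hneg : ∀ᶠ t in nhdsWithin t₀ (Iio t₀), D (b t, t) (0, 1) ≤ 0 := by
      filter_upwards [hev] with t ht
      have := hbneg t ht.1.le ht.2
      rw [htime (b t) t] at this
      exact this.le
    exact le_of_tendsto (hevalb (0, 1)) hneg
  have htz : D (c, t₀) (0, 1) = 0 := le_antisymm htneg htpos
  refine ContinuousLinearMap.ext fun p => ?_
  show D (c, t₀) p = 0
  have hp : p = (p.1, (0 : ℝ)) + (p.2 : ℝ) • ((0 : Fin m → ℝ), (1 : ℝ)) := by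
    ext <;> simp
  calc D (c, t₀) p = D (c, t₀) ((p.1, 0) + p.2 • ((0 : Fin m → ℝ), (1 : ℝ))) := by rw [← hp]
    _ = D (c, t₀) (p.1, 0) + p.2 • D (c, t₀) (0, 1) := by
        rw [map_add, map_smul]
    _ = 0 := by rw [hsp, htz, smul_zero, add_zero]
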